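/- arXiv:1003.3177 — 6 statements merged into one kernel-verified Lean document; each statement's English description precedes it below -/
import Mathlib

section
/- Let n : ℕ, φ : Fin n → ℝ, and g ∈ GL_n(ℂ). Then the matrix-valued function (0,∞) → Mat_n(ℂ) sending t to the matrix with (i,j) entry t^(φ i − φ j) · g i j (i.e. to D(t) ⬝ g ⬝ D(t)⁻¹ where D(t) is the diagonal matrix with entries t^(φ i)) converges to a limit as t → 0⁺ if and only if g i j = 0 for all indices i, j with φ i < φ j. -/
open Filter Topology

/-- For `g ∈ GL_n(ℂ)`, the function `t ↦ D(t) ⬝ g ⬝ D(t)⁻¹` on `(0,∞)`,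
whose `(i,j)` entry is `t ^ (φ i - φ j) * g i j`, has a limit as `t → 0⁺` if and only if
`g i j = 0` whenever `φ i < φ j`. -/
theorem limit_exists_iff_parabolic (n : ℕ) (φ : Fin n → ℝ)
    (g : (Matrix (Fin n) (Fin n) ℂ)ˣ) :
    (∃ L : Matrix (Fin n) (Fin n) ℂ,
      Tendsto (fun t : ℝ => Matrix.of fun i j => ((t ^ (φ i - φ j) : ℝ) : ℂ) * g.val i j)
        (nhdsWithin 0 (Set.Ioi 0)) (nhds L)) ↔
    ∀ i j, φ i < φ j → g.val i j = 0 := by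
  constructor
  · rintro ⟨L, hL⟩ i j hij
    by_contra hg
    -- entry tends to L i j
    have hentry : Tendsto (fun t : ℝ => ((t ^ (φ i - φ j) : ℝ) : ℂ) * g.val i j)
        (𝓝[>] (0:ℝ)) (𝓝 (L i j)) :=
      ((continuous_id.matrix_elem i j).tendsto L).comp hL
    have hnorm : Tendsto (fun t : ℝ => ‖((t ^ (φ i - φ j) : ℝ) : ℂ) * g.val i j‖)
        (𝓝[>] (0:ℝ)) (𝓝 ‖L i j‖) := hentry.norm
    -- but norm tends to atTop
    have hc : φ i - φ j < 0 := by linarith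
    have h1 : Tendsto (fun t : ℝ => Real.log t * (φ i - φ j)) (𝓝[>] (0:ℝ)) atTop :=
      Real.tendsto_log_nhdsGT_zero.atBot_mul_const_of_neg hc
    have h2 : Tendsto (fun t : ℝ => t ^ (φ i - φ j)) (𝓝[>] (0:ℝ)) atTop := by
      have := (Real.tendsto_exp_atTop.comp h1)
      refine this.congr' ?_
      filter_upwards [self_mem_nhdsWithin] with t ht
      simp [Real.rpow_def_of_pos ht]
    have h3 : Tendsto (fun t : ℝ => ‖((t ^ (φ i - φ j) : ℝ) : ℂ) * g.val i j‖)
        (𝓝[>] (0:ℝ)) atTop := by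
      have hg' : 0 < ‖g.val i j‖ := norm_pos_iff.mpr hg
      have := h2.atTop_mul_const hg'
      refine this.congr' ?_
      filter_upwards [self_mem_nhdsWithin] with t ht
      rw [norm_mul, Complex.norm_real, Real.norm_eq_abs,
        abs_of_nonneg (Real.rpow_nonneg ht.le _)]
    exact not_tendsto_nhds_of_tendsto_atTop h3 _ hnorm
  · intro h
    refine ⟨Matrix.of fun i j => if φ i = φ j then g.val i j else 0, ?_⟩
    refine tendsto_pi_nhds.2 ?_
    intro i
    refine tendsto_pi_nhds.2 ?_
    intro j
    show Tendsto (fun t : ℝ => ((t ^ (φ i - φ j) : ℝ) : ℂ) * g.val i j) _ _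
    rcases lt_trichotomy (φ i) (φ j) with hlt | heq | hgt
    · simpa [Matrix.of_apply, hlt.ne, h i j hlt] using
        (tendsto_const_nhds : Tendsto (fun _ : ℝ => (0:ℂ)) (𝓝[>] (0:ℝ)) (𝓝 0))
    · simp only [Matrix.of_apply, if_pos heq, heq, sub_self]
      simpa [Real.rpow_zero] using
        (tendsto_const_nhds : Tendsto (fun _ : ℝ => g.val i j) (𝓝[>] (0:ℝ)) _)
    · have hc : 0 < φ i - φ j := by linarith
      have h0 : Tendsto (fun t : ℝ => t ^ (φ i - φ j)) (𝓝 (0:ℝ)) (𝓝 0) := by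
        have := Real.continuousAt_rpow_const 0 (φ i - φ j) (Or.inr hc.le)
        simpa [Real.zero_rpow hc.ne'] using this.tendsto
      have h1 : Tendsto (fun t : ℝ => ((t ^ (φ i - φ j) : ℝ) : ℂ) * g.val i j)
          (𝓝[>] (0:ℝ)) (𝓝 (((0:ℝ) : ℂ) * g.val i j)) :=
        ((Complex.continuous_ofReal.tendsto 0).comp (h0.mono_left nhdsWithin_le_nhds)).mul_const _
      simpa [Matrix.of_apply, hgt.ne'] using h1
end

section
/- Let n : ℕ, φ : Fin n → ℝ, h ∈ GL_n(ℂ), and set S = h ⬝ diag(φ) ⬝ h⁻¹. Then the set of g ∈ GL_n(ℂ) such that the function t ↦ exp((log t)·S) ⬝ g ⬝ exp(−(log t)·S) (for t ∈ (0,∞)) converges to a limit as t → 0⁺ is exactly h P_φ h⁻¹ = { h p h⁻¹ : p ∈ P_φ }. -/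
open Filter Topology

/-- The parabolic subgroup `P_φ ⊆ GL_n(ℂ)` attached to `φ : Fin n → ℝ`. -/
def parabolicSet (n : ℕ) (φ : Fin n → ℝ) : Set ((Matrix (Fin n) (Fin n) ℂ)ˣ) :=
  {g | ∀ i j, φ i < φ j → g.val i j = 0}

namespace ParabolicAux

open Matrix

variable {n : ℕ}

lemma exp_smul_diag (φ : Fin n → ℝ) (c : ℂ) :
    NormedSpace.exp (c • Matrix.diagonal (fun i => (φ i : ℂ))) =
      Matrix.diagonal (fun i => Complex.exp (c * φ i)) := by
  rw [← Matrix.diagonal_smul, Matrix.exp_diagonal]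
  ext i j
  simp only [Matrix.diagonal_apply]
  split_ifs with hij
  · rw [Pi.coe_exp, Pi.smul_apply, ← Complex.exp_eq_exp_ℂ, smul_eq_mul]
  · rfl

lemma entry_formula (φ : Fin n → ℝ) (A : Matrix (Fin n) (Fin n) ℂ) (c : ℂ) (i j : Fin n) :
    (NormedSpace.exp (c • Matrix.diagonal (fun i => (φ i : ℂ))) * A *
      NormedSpace.exp ((-c) • Matrix.diagonal (fun i => (φ i : ℂ)))) i j =
      Complex.exp (c * ((φ i : ℂ) - φ j)) * A i j := by
  rw [exp_smul_diag, exp_smul_diag, Matrix.mul_diagonal, Matrix.diagonal_mul,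
    mul_right_comm, ← Complex.exp_add]
  congr 2
  ring

/-- The diagonal case. -/
lemma diag_case (φ : Fin n → ℝ) (A : Matrix (Fin n) (Fin n) ℂ) :
    (∃ L : Matrix (Fin n) (Fin n) ℂ,
        Tendsto (fun t : ℝ =>
            NormedSpace.exp ((Real.log t : ℂ) • Matrix.diagonal (fun i => (φ i : ℂ))) * A *
              NormedSpace.exp ((-(Real.log t : ℂ)) • Matrix.diagonal (fun i => (φ i : ℂ))))
          (nhdsWithin 0 (Set.Ioi 0)) (nhds L)) ↔
      ∀ i j, φ i < φ j → A i j = 0 := by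
  have key : ∀ (t : ℝ) (i j : Fin n),
      (NormedSpace.exp ((Real.log t : ℂ) • Matrix.diagonal (fun i => (φ i : ℂ))) * A *
        NormedSpace.exp ((-(Real.log t : ℂ)) • Matrix.diagonal (fun i => (φ i : ℂ)))) i j =
      (Real.exp (Real.log t * (φ i - φ j)) : ℂ) * A i j := by
    intro t i j
    rw [entry_formula]
    congr 1
    rw [Complex.ofReal_exp]
    congr 1
    push_cast
    ring
  constructor
  · rintro ⟨L, hL⟩ i j hij
    by_contra hA
    have h1 : Tendsto (fun t : ℝ =>
        (NormedSpace.exp ((Real.log t : ℂ) • Matrix.diagonal (fun i => (φ i : ℂ))) * A *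
          NormedSpace.exp ((-(Real.log t : ℂ)) • Matrix.diagonal (fun i => (φ i : ℂ)))) i j)
        (nhdsWithin 0 (Set.Ioi 0)) (nhds (L i j)) :=
      tendsto_pi_nhds.1 (tendsto_pi_nhds.1 hL i) j
    have h2 : Tendsto (fun t : ℝ =>
        ‖(NormedSpace.exp ((Real.log t : ℂ) • Matrix.diagonal (fun i => (φ i : ℂ))) * A *
          NormedSpace.exp ((-(Real.log t : ℂ)) • Matrix.diagonal (fun i => (φ i : ℂ)))) i j‖)
        (nhdsWithin 0 (Set.Ioi 0)) (nhds ‖L i j‖) := h1.norm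
    have hnorm : ∀ t : ℝ,
        ‖(NormedSpace.exp ((Real.log t : ℂ) • Matrix.diagonal (fun i => (φ i : ℂ))) * A *
          NormedSpace.exp ((-(Real.log t : ℂ)) • Matrix.diagonal (fun i => (φ i : ℂ)))) i j‖ =
        Real.exp (Real.log t * (φ i - φ j)) * ‖A i j‖ := by
      intro t
      rw [key, norm_mul, Complex.norm_real, Real.norm_eq_abs, abs_of_pos (Real.exp_pos _)]
    rw [show (fun t : ℝ =>
        ‖(NormedSpace.exp ((Real.log t : ℂ) • Matrix.diagonal (fun i => (φ i : ℂ))) * A *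
          NormedSpace.exp ((-(Real.log t : ℂ)) • Matrix.diagonal (fun i => (φ i : ℂ)))) i j‖) =
        (fun t : ℝ => Real.exp (Real.log t * (φ i - φ j)) * ‖A i j‖) from funext hnorm] at h2
    have h3 : Tendsto (fun t : ℝ => Real.exp (Real.log t * (φ i - φ j)) * ‖A i j‖)
        (nhdsWithin 0 (Set.Ioi 0)) atTop := by
      have hneg : φ i - φ j < 0 := by linarith
      have hexp : Tendsto (fun t : ℝ => Real.exp (Real.log t * (φ i - φ j)))
          (nhdsWithin 0 (Set.Ioi 0)) atTop :=
        Real.tendsto_exp_atTop.comp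
          (Real.tendsto_log_nhdsGT_zero.atBot_mul_const_of_neg hneg)
      exact hexp.atTop_mul_const (norm_pos_iff.mpr hA)
    exact not_tendsto_atTop_of_tendsto_nhds h2 h3
  · intro hA
    refine ⟨fun i j => if φ i = φ j then A i j else 0, ?_⟩
    refine tendsto_pi_nhds.2 ?_
    intro i
    rw [tendsto_pi_nhds]
    intro j
    simp_rw [key]
    rcases lt_trichotomy (φ i) (φ j) with hlt | heq | hgt
    · simp [hA i j hlt, if_neg (ne_of_lt hlt)]
    · simp only [heq, if_pos rfl, sub_self, mul_zero, Real.exp_zero, Complex.ofReal_one, one_mul]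
      exact tendsto_const_nhds
    · rw [if_neg (ne_of_gt hgt)]
      have h0 : Tendsto (fun t : ℝ => Real.exp (Real.log t * (φ i - φ j)))
          (nhdsWithin 0 (Set.Ioi 0)) (nhds 0) := by
        have hpos : 0 < φ i - φ j := by linarith
        exact Real.tendsto_exp_atBot.comp
          (Real.tendsto_log_nhdsGT_zero.atBot_mul_const hpos)
      have hc : Tendsto (fun t : ℝ => (Real.exp (Real.log t * (φ i - φ j)) : ℂ))
          (nhdsWithin 0 (Set.Ioi 0)) (nhds 0) := by
        rw [show ((0 : ℂ) = ((0 : ℝ) : ℂ)) by norm_num]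
        exact (Complex.continuous_ofReal.continuousAt.tendsto).comp h0
      simpa using hc.mul_const (A i j)

end ParabolicAux

/-- For `S = h ⬝ diag(φ) ⬝ h⁻¹`, the set of `g ∈ GL_n(ℂ)` such that
`t ↦ exp((log t)·S) ⬝ g ⬝ exp(−(log t)·S)` converges as `t → 0⁺` is exactly `h P_φ h⁻¹`. -/
theorem conjugated_parabolic_as_limit_set (n : ℕ) (φ : Fin n → ℝ)
    (h : (Matrix (Fin n) (Fin n) ℂ)ˣ)
    (S : Matrix (Fin n) (Fin n) ℂ)
    (hS : S = h.val * Matrix.diagonal (fun i => (φ i : ℂ)) * (↑h⁻¹ : Matrix (Fin n) (Fin n) ℂ)) :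
    {g : (Matrix (Fin n) (Fin n) ℂ)ˣ | ∃ L : Matrix (Fin n) (Fin n) ℂ,
        Tendsto (fun t : ℝ =>
            NormedSpace.exp ((Real.log t : ℂ) • S) * g.val *
              NormedSpace.exp ((-(Real.log t : ℂ)) • S))
          (nhdsWithin 0 (Set.Ioi 0)) (nhds L)} =
    {g : (Matrix (Fin n) (Fin n) ℂ)ˣ | ∃ p ∈ parabolicSet n φ, g = h * p * h⁻¹} := by
  set D : Matrix (Fin n) (Fin n) ℂ := Matrix.diagonal (fun i => (φ i : ℂ)) with hD
  have expS : ∀ c : ℂ, NormedSpace.exp (c • S) =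
      h.val * NormedSpace.exp (c • D) * (↑h⁻¹ : Matrix (Fin n) (Fin n) ℂ) := by
    intro c
    have hc : c • S = h.val * (c • D) * (↑h⁻¹ : Matrix (Fin n) (Fin n) ℂ) := by
      rw [hS, Matrix.mul_smul, Matrix.smul_mul]
    rw [hc, Matrix.exp_units_conj]
  have hinv : (↑h⁻¹ : Matrix (Fin n) (Fin n) ℂ) * h.val = 1 := h.inv_mul
  have hinv' : h.val * (↑h⁻¹ : Matrix (Fin n) (Fin n) ℂ) = 1 := h.mul_inv
  have sandwich : ∀ X : Matrix (Fin n) (Fin n) ℂ,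
      (↑h⁻¹ : Matrix (Fin n) (Fin n) ℂ) * (h.val * X * (↑h⁻¹ : Matrix (Fin n) (Fin n) ℂ)) * h.val
        = X := by
    intro X
    simp only [← mul_assoc, hinv, one_mul]
    rw [mul_assoc, hinv, mul_one]
  ext g
  simp only [Set.mem_setOf_eq]
  have hconj : ∀ t : ℝ,
      NormedSpace.exp ((Real.log t : ℂ) • S) * g.val *
        NormedSpace.exp ((-(Real.log t : ℂ)) • S) =
      h.val * (NormedSpace.exp ((Real.log t : ℂ) • D) *
        ((h⁻¹ * g * h : (Matrix (Fin n) (Fin n) ℂ)ˣ) : Matrix (Fin n) (Fin n) ℂ) *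
        NormedSpace.exp ((-(Real.log t : ℂ)) • D)) * (↑h⁻¹ : Matrix (Fin n) (Fin n) ℂ) := by
    intro t
    rw [expS, expS]
    simp only [Units.val_mul, mul_assoc]
  have contL : Continuous (fun X : Matrix (Fin n) (Fin n) ℂ =>
      (↑h⁻¹ : Matrix (Fin n) (Fin n) ℂ) * X * h.val) :=
    (continuous_const.matrix_mul continuous_id).matrix_mul continuous_const
  have contR : Continuous (fun X : Matrix (Fin n) (Fin n) ℂ =>
      h.val * X * (↑h⁻¹ : Matrix (Fin n) (Fin n) ℂ)) :=
    (continuous_const.matrix_mul continuous_id).matrix_mul continuous_const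
  constructor
  · rintro ⟨L, hL⟩
    refine ⟨h⁻¹ * g * h, ?_, by group⟩
    rw [parabolicSet, Set.mem_setOf_eq]
    rw [← ParabolicAux.diag_case φ
      ((h⁻¹ * g * h : (Matrix (Fin n) (Fin n) ℂ)ˣ) : Matrix (Fin n) (Fin n) ℂ)]
    refine ⟨(↑h⁻¹ : Matrix (Fin n) (Fin n) ℂ) * L * h.val, ?_⟩
    have heq2 : (fun t : ℝ => NormedSpace.exp ((Real.log t : ℂ) • D) *
        ((h⁻¹ * g * h : (Matrix (Fin n) (Fin n) ℂ)ˣ) : Matrix (Fin n) (Fin n) ℂ) *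
        NormedSpace.exp ((-(Real.log t : ℂ)) • D)) =
        (fun X : Matrix (Fin n) (Fin n) ℂ =>
          (↑h⁻¹ : Matrix (Fin n) (Fin n) ℂ) * X * h.val) ∘
        (fun t : ℝ => NormedSpace.exp ((Real.log t : ℂ) • S) * g.val *
          NormedSpace.exp ((-(Real.log t : ℂ)) • S)) := by
      funext t
      simp only [Function.comp_apply, hconj t, sandwich]
    rw [heq2]
    exact (contL.tendsto L).comp hL
  · rintro ⟨p, hp, rfl⟩
    rw [parabolicSet, Set.mem_setOf_eq] at hp
    obtain ⟨L, hL⟩ := (ParabolicAux.diag_case φ p.val).mpr hp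
    refine ⟨h.val * L * (↑h⁻¹ : Matrix (Fin n) (Fin n) ℂ), ?_⟩
    have hpp : (h⁻¹ * (h * p * h⁻¹) * h : (Matrix (Fin n) (Fin n) ℂ)ˣ) = p := by group
    have heq : (fun t : ℝ => NormedSpace.exp ((Real.log t : ℂ) • S) *
        ((h * p * h⁻¹ : (Matrix (Fin n) (Fin n) ℂ)ˣ) : Matrix (Fin n) (Fin n) ℂ) *
        NormedSpace.exp ((-(Real.log t : ℂ)) • S)) =
        (fun X : Matrix (Fin n) (Fin n) ℂ =>
          h.val * X * (↑h⁻¹ : Matrix (Fin n) (Fin n) ℂ)) ∘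
        (fun t : ℝ => NormedSpace.exp ((Real.log t : ℂ) • D) * p.val *
          NormedSpace.exp ((-(Real.log t : ℂ)) • D)) := by
      funext t
      rw [Function.comp_apply, hconj t, hpp]
    rw [heq]
    exact (contR.tendsto L).comp hL
end

section
/- Let n : ℕ, φ : Fin n → ℝ, and g ∈ GL_n(ℂ). Then the function t ↦ D(t) ⬝ g ⬝ D(t)⁻¹ (for t ∈ (0,∞), where D(t) is the diagonal matrix with entries t^(φ i)) converges to the identity matrix as t → 0⁺ if and only if: g i j = 0 for all i, j with φ i < φ j, and g i j = (1 if i = j, else 0) for all i, j with φ i = φ j. -/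
open Filter Topology

private lemma rpow_tendsto_zero {c : ℝ} (hc : 0 < c) :
    Tendsto (fun t : ℝ => ((t ^ c : ℝ) : ℂ)) (nhdsWithin 0 (Set.Ioi 0)) (nhds 0) := by
  have h : ContinuousAt (fun t : ℝ => t ^ c) 0 :=
    Real.continuousAt_rpow_const 0 c (Or.inr hc.le)
  have h0 : (0 : ℝ) ^ c = 0 := Real.zero_rpow hc.ne'
  have := (Complex.continuous_ofReal.continuousAt.comp h).tendsto
  simp only [Function.comp, h0, Complex.ofReal_zero] at this
  exact this.mono_left nhdsWithin_le_nhds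

/-- For `g ∈ GL_n(ℂ)`, the function `t ↦ D(t) ⬝ g ⬝ D(t)⁻¹` on `(0,∞)`,
with `(i,j)` entry `t ^ (φ i - φ j) * g i j`, tends to the identity matrix as `t → 0⁺` if and
only if `g i j = 0` whenever `φ i < φ j` and `g i j = δ_{ij}` whenever `φ i = φ j`. -/
theorem limit_one_iff_unipotent_radical (n : ℕ) (φ : Fin n → ℝ)
    (g : (Matrix (Fin n) (Fin n) ℂ)ˣ) :
    Tendsto (fun t : ℝ => Matrix.of fun i j => ((t ^ (φ i - φ j) : ℝ) : ℂ) * g.val i j)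
        (nhdsWithin 0 (Set.Ioi 0)) (nhds (1 : Matrix (Fin n) (Fin n) ℂ)) ↔
    ((∀ i j, φ i < φ j → g.val i j = 0) ∧
      ∀ i j, φ i = φ j → g.val i j = if i = j then 1 else 0) := by
  have hent : (Tendsto (fun t : ℝ => Matrix.of fun i j =>
      ((t ^ (φ i - φ j) : ℝ) : ℂ) * g.val i j)
        (nhdsWithin 0 (Set.Ioi 0)) (nhds (1 : Matrix (Fin n) (Fin n) ℂ))) ↔
      ∀ i j, Tendsto (fun t : ℝ => ((t ^ (φ i - φ j) : ℝ) : ℂ) * g.val i j)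
        (nhdsWithin 0 (Set.Ioi 0)) (nhds (if i = j then 1 else 0)) := by
    refine Iff.trans tendsto_pi_nhds ?_
    constructor
    · intro h i j
      have := (tendsto_pi_nhds.mp (h i)) j
      simpa [Matrix.one_apply] using this
    · intro h i
      rw [tendsto_pi_nhds]
      intro j
      simpa [Matrix.one_apply] using h i j
  rw [hent]
  constructor
  · intro h
    constructor
    · intro i j hij
      have hne : i ≠ j := fun e => absurd (congrArg φ e) (ne_of_lt hij)
      have h1 := h i j
      rw [if_neg hne] at h1
      have h2 := rpow_tendsto_zero (c := φ j - φ i) (by linarith)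
      have h3 := h2.mul h1
      rw [zero_mul] at h3
      have hcongr : (fun t : ℝ => ((t ^ (φ j - φ i) : ℝ) : ℂ) *
          (((t ^ (φ i - φ j) : ℝ) : ℂ) * g.val i j)) =ᶠ[nhdsWithin 0 (Set.Ioi 0)]
          (fun _ => g.val i j) := by
        filter_upwards [self_mem_nhdsWithin] with t ht
        have ht' : (0 : ℝ) < t := ht
        rw [← mul_assoc, ← Complex.ofReal_mul, ← Real.rpow_add ht']
        have he : φ j - φ i + (φ i - φ j) = 0 := by ring
        rw [he, Real.rpow_zero]
        norm_num
      exact tendsto_nhds_unique tendsto_const_nhds (h3.congr' hcongr)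
    · intro i j hij
      have h1 := h i j
      have hcongr : (fun t : ℝ => ((t ^ (φ i - φ j) : ℝ) : ℂ) * g.val i j)
          =ᶠ[nhdsWithin 0 (Set.Ioi 0)] (fun _ => g.val i j) := by
        filter_upwards with t
        rw [hij]
        norm_num
      exact tendsto_nhds_unique tendsto_const_nhds (h1.congr' hcongr)
  · rintro ⟨h1, h2⟩ i j
    rcases lt_trichotomy (φ i) (φ j) with hlt | heq | hgt
    · have hne : i ≠ j := fun e => absurd (congrArg φ e) (ne_of_lt hlt)
      rw [if_neg hne, h1 i j hlt]
      simp only [mul_zero]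
      exact tendsto_const_nhds
    · have : (fun t : ℝ => ((t ^ (φ i - φ j) : ℝ) : ℂ) * g.val i j)
          = fun _ => if i = j then 1 else 0 := by
        funext t
        rw [heq, ← h2 i j heq]
        norm_num
      rw [this]
      exact tendsto_const_nhds
    · have hne : i ≠ j := fun e => absurd (congrArg φ e) (ne_of_gt hgt)
      rw [if_neg hne]
      have := (rpow_tendsto_zero (c := φ i - φ j) (by linarith)).mul_const (g.val i j)
      simpa using this
end

section
/- Let n : ℕ, τ : Fin n → ℝ, Θ = diag(τ), and suppose X ∈ Mat_n(ℂ) commutes with exp(2πi·Θ). Then there is a unique finitely supported family of matrices (A m)_{m ∈ ℤ} such that X = Σ_{m ∈ ℤ} A m and Θ ⬝ A m − A m ⬝ Θ = m · A m for every m ∈ ℤ; explicitly, A m is the matrix with (i,j) entry equal to X i j if τ i − τ j = m and 0 otherwise. -/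
open Real

/-- If `X` commutes with `exp(2πi·Θ)`, where `Θ = diag(τ)` with `τ` real,
then `X` decomposes uniquely as a finitely supported sum `X = Σ_{m ∈ ℤ} A m` with
`[Θ, A m] = m · A m`; explicitly `(A m) i j = X i j` if `τ i − τ j = m` and `0` otherwise. -/
theorem integer_eigenspace_decomposition (n : ℕ) (τ : Fin n → ℝ)
    (Θ : Matrix (Fin n) (Fin n) ℂ)
    (hΘ : Θ = Matrix.diagonal fun k => (τ k : ℂ))
    (X : Matrix (Fin n) (Fin n) ℂ)
    (hX : X * NormedSpace.exp ((2 * π * Complex.I) • Θ) =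
      NormedSpace.exp ((2 * π * Complex.I) • Θ) * X)
    (B : ℤ → Matrix (Fin n) (Fin n) ℂ)
    (hB : B = fun m : ℤ => Matrix.of fun i j => if τ i - τ j = (m : ℝ) then X i j else 0) :
    (Set.Finite {m : ℤ | B m ≠ 0}) ∧
    X = ∑ᶠ m : ℤ, B m ∧
    (∀ m : ℤ, Θ * B m - B m * Θ = (m : ℂ) • B m) ∧
    (∀ A : ℤ → Matrix (Fin n) (Fin n) ℂ, Set.Finite {m : ℤ | A m ≠ 0} →
      X = ∑ᶠ m : ℤ, A m → (∀ m : ℤ, Θ * A m - A m * Θ = (m : ℂ) • A m) → A = B) := by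
  -- the exponential of the diagonal matrix
  have hexp : NormedSpace.exp ((2 * π * Complex.I) • Θ) =
      Matrix.diagonal fun k => Complex.exp (2 * π * Complex.I * (τ k : ℂ)) := by
    rw [hΘ, ← Matrix.diagonal_smul, Matrix.exp_diagonal, Pi.exp_def]
    refine congrArg Matrix.diagonal (funext fun k => ?_)
    rw [Pi.smul_apply, smul_eq_mul, ← Complex.exp_eq_exp_ℂ]
  -- key vanishing fact
  have hkey : ∀ i j, X i j ≠ 0 → ∃ m : ℤ, τ i - τ j = (m : ℝ) := by
    intro i j hne
    have h := congrFun (congrFun hX i) j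
    rw [hexp] at h
    rw [Matrix.mul_diagonal, Matrix.diagonal_mul] at h
    have heq : Complex.exp (2 * π * Complex.I * (τ j : ℂ)) =
        Complex.exp (2 * π * Complex.I * (τ i : ℂ)) := by
      have h0 : X i j * (Complex.exp (2 * π * Complex.I * (τ j : ℂ)) -
          Complex.exp (2 * π * Complex.I * (τ i : ℂ))) = 0 := by
        rw [mul_sub, h]; ring
      rcases mul_eq_zero.mp h0 with h1 | h2
      · exact absurd h1 hne
      · exact sub_eq_zero.mp h2
    obtain ⟨k, hk⟩ := Complex.exp_eq_exp_iff_exists_int.mp heq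
    refine ⟨-k, ?_⟩
    have h2pi : (2 * π * Complex.I) ≠ 0 := by
      simp [Real.pi_ne_zero, Complex.I_ne_zero]
    have : (τ j : ℂ) = (τ i : ℂ) + k := by
      apply mul_left_cancel₀ h2pi
      rw [hk]; ring
    have : (τ i : ℝ) - τ j = (-k : ℤ) := by
      have := this
      push_cast at this ⊢
      have h3 : (τ i : ℂ) - τ j = -(k : ℂ) := by rw [this]; ring
      exact_mod_cast h3
    exact this
  -- B m i j vanishes unless τ i - τ j = m
  have hBapp : ∀ m i j, B m i j = if τ i - τ j = (m : ℝ) then X i j else 0 := by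
    intro m i j; rw [hB]; rfl
  -- finiteness of support
  have hfin : Set.Finite {m : ℤ | B m ≠ 0} := by
    apply Set.Finite.subset (Set.finite_range fun p : Fin n × Fin n => ⌊τ p.1 - τ p.2⌋)
    intro m hm
    by_contra h
    apply hm
    ext i j
    rw [hBapp, Matrix.zero_apply, if_neg]
    intro hc
    exact h ⟨(i, j), by show ⌊τ i - τ j⌋ = m; rw [hc, Int.floor_intCast]⟩
  refine ⟨hfin, ?_, ?_, ?_⟩
  · -- the sum
    have hsum : ∑ᶠ m : ℤ, B m = ∑ m ∈ hfin.toFinset, B m := by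
      apply finsum_eq_sum_of_support_subset
      intro m hm
      exact hfin.mem_toFinset.mpr hm
    rw [hsum]
    ext i j
    rw [Matrix.sum_apply]
    by_cases hij : ∃ m₀ : ℤ, τ i - τ j = (m₀ : ℝ)
    · obtain ⟨m₀, hm₀⟩ := hij
      have hcond : ∀ m : ℤ, (τ i - τ j = (m : ℝ)) ↔ m = m₀ := by
        intro m
        constructor
        · intro h
          have : (m : ℝ) = (m₀ : ℝ) := by rw [← h, hm₀]
          exact_mod_cast this
        · rintro rfl; exact hm₀
      have : ∀ m : ℤ, B m i j = if m = m₀ then X i j else 0 := by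
        intro m; rw [hBapp]; simp [hcond m]
      simp_rw [this]
      rw [Finset.sum_ite_eq' hfin.toFinset m₀ fun _ => X i j]
      by_cases hmem : m₀ ∈ hfin.toFinset
      · rw [if_pos hmem]
      · rw [if_neg hmem]
        have hB0 : B m₀ = 0 := by
          by_contra hc
          exact hmem (hfin.mem_toFinset.mpr hc)
        have := congrFun (congrFun (congrArg (fun M => (M : Matrix (Fin n) (Fin n) ℂ)) hB0) i) j
        simp only [Matrix.zero_apply] at this
        rw [hBapp, if_pos hm₀] at this
        exact this
    · have hX0 : X i j = 0 := by
        by_contra hc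
        exact hij (hkey i j hc)
      have : ∀ m : ℤ, B m i j = 0 := by
        intro m
        rw [hBapp, if_neg]
        intro hc
        exact hij ⟨m, hc⟩
      simp_rw [this]
      simp [hX0]
  · -- the commutator relation
    intro m
    rw [hΘ]
    ext i j
    rw [Matrix.sub_apply, Matrix.diagonal_mul, Matrix.mul_diagonal, Matrix.smul_apply,
      hBapp, smul_eq_mul]
    by_cases h : τ i - τ j = (m : ℝ)
    · rw [if_pos h]
      have hc : (τ i : ℂ) - (τ j : ℂ) = (m : ℂ) := by exact_mod_cast h
      linear_combination X i j * hc
    · rw [if_neg h]; ring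
  · -- uniqueness
    intro A hAfin hAsum hAcomm
    have hA0 : ∀ (m : ℤ) i j, τ i - τ j ≠ (m : ℝ) → A m i j = 0 := by
      intro m i j hne
      have h := congrFun (congrFun (hAcomm m) i) j
      rw [hΘ] at h
      rw [Matrix.sub_apply, Matrix.diagonal_mul, Matrix.mul_diagonal, Matrix.smul_apply,
        smul_eq_mul] at h
      have hc : ((τ i : ℂ) - (τ j : ℂ)) - (m : ℂ) ≠ 0 := by
        intro hc
        apply hne
        have h3 : (τ i : ℂ) - (τ j : ℂ) = (m : ℂ) := sub_eq_zero.mp hc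
        exact_mod_cast h3
      have : (((τ i : ℂ) - (τ j : ℂ)) - (m : ℂ)) * A m i j = 0 := by
        linear_combination h
      rcases mul_eq_zero.mp this with h1 | h2
      · exact absurd h1 hc
      · exact h2
    have hAsum' : X = ∑ m ∈ hAfin.toFinset, A m := by
      rw [hAsum]
      apply finsum_eq_sum_of_support_subset
      intro m hm
      exact hAfin.mem_toFinset.mpr hm
    funext m
    ext i j
    rw [hBapp]
    by_cases hij : ∃ m₀ : ℤ, τ i - τ j = (m₀ : ℝ)
    · obtain ⟨m₀, hm₀⟩ := hij
      have hXval : X i j = A m₀ i j := by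
        have : X i j = ∑ k ∈ hAfin.toFinset, A k i j := by
          rw [hAsum']; rw [Matrix.sum_apply]
        rw [this]
        apply Finset.sum_eq_single m₀
        · intro k _ hk
          apply hA0
          rw [hm₀]
          intro hc
          exact hk (by exact_mod_cast hc.symm)
        · intro hnm
          have : A m₀ = 0 := by
            by_contra hc
            exact hnm (hAfin.mem_toFinset.mpr hc)
          rw [this, Matrix.zero_apply]
      by_cases hm : m = m₀
      · subst hm
        rw [if_pos hm₀, hXval]
      · rw [if_neg]
        · apply hA0
          rw [hm₀]
          intro hc
          exact hm (by exact_mod_cast hc.symm)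
        · intro hc
          apply hm
          have : (m : ℝ) = (m₀ : ℝ) := by rw [← hc, hm₀]
          exact_mod_cast this
    · rw [if_neg fun hc => hij ⟨m, hc⟩]
      apply hA0
      intro hc
      exact hij ⟨m, hc⟩
end

section
/- Let n : ℕ, τ : Fin n → ℝ, Θ = diag(τ), and let σ ∈ Mat_n(ℂ) with Θ ⬝ σ = σ ⬝ Θ. Let (A m)_{m ∈ ℤ} be a finitely supported family of matrices with Θ ⬝ A m − A m ⬝ Θ = m · A m and σ ⬝ A m = A m ⬝ σ for all m, and set R = σ + Σ_{m ∈ ℤ} A m. For t ∈ (0,∞) define Φ(t) = exp((log t)·Θ) ⬝ exp((log t)·R). Then Φ is differentiable on (0,∞) and for every t > 0 one has t · Φ′(t) = (Θ + σ + Σ_{m ∈ ℤ} t^m · A m) ⬝ Φ(t). -/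
open Real

attribute [local instance] Matrix.linftyOpNormedAddCommGroup Matrix.linftyOpNormedRing
  Matrix.linftyOpNormedAlgebra

/-- Derivative of `s ↦ exp((log s)•M)` at `t > 0`. -/
theorem aux_deriv_exp_log_smul (n : ℕ) (M : Matrix (Fin n) (Fin n) ℂ) {t : ℝ} (ht : 0 < t) :
    HasDerivAt (fun s : ℝ => NormedSpace.exp ((Real.log s : ℂ) • M))
      ((((t⁻¹ : ℝ) : ℂ)) • (M * NormedSpace.exp ((Real.log t : ℂ) • M))) t := by
  have h1 : HasDerivAt (fun u : ℂ => NormedSpace.exp (u • M))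
      (M * NormedSpace.exp ((Real.log t : ℂ) • M)) ((Real.log t : ℂ)) :=
    hasDerivAt_exp_smul_const' M _
  have h2 : HasDerivAt (fun s : ℝ => ((Real.log s : ℝ) : ℂ)) (((t⁻¹ : ℝ) : ℂ)) t :=
    Complex.ofRealCLM.hasFDerivAt.comp_hasDerivAt t (Real.hasDerivAt_log ht.ne')
  exact h1.scomp t h2

/-- Conjugation relation: if `[Θ, B] = m • B` with `Θ = diag(τ)` real, then
`exp((log t)•Θ) * B = t^m • (B * exp((log t)•Θ))` for `t > 0`. -/
theorem aux_conj_exp_diag (n : ℕ) (τ : Fin n → ℝ)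
    (Θ : Matrix (Fin n) (Fin n) ℂ) (hΘ : Θ = Matrix.diagonal fun k => (τ k : ℂ))
    (B : Matrix (Fin n) (Fin n) ℂ) (m : ℤ)
    (hB : Θ * B - B * Θ = (m : ℂ) • B) {t : ℝ} (ht : 0 < t) :
    NormedSpace.exp ((Real.log t : ℂ) • Θ) * B
      = ((t ^ (m : ℤ) : ℝ) : ℂ) • (B * NormedSpace.exp ((Real.log t : ℂ) • Θ)) := by
  have hdiag : NormedSpace.exp ((Real.log t : ℂ) • Θ)
      = Matrix.diagonal fun k => Complex.exp ((Real.log t : ℂ) * (τ k : ℂ)) := by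
    rw [hΘ, ← Matrix.diagonal_smul, Matrix.exp_diagonal]
    exact congrArg Matrix.diagonal (funext fun k => by
      rw [Pi.coe_exp]; simp [smul_eq_mul, Complex.exp_eq_exp_ℂ])
  ext i j
  rw [hdiag]
  simp only [Matrix.diagonal_mul, Matrix.smul_apply, Matrix.mul_diagonal, smul_eq_mul]
  have hentry : ((τ i : ℂ) - (τ j : ℂ)) * B i j = (m : ℂ) * B i j := by
    have h := congrFun (congrFun hB i) j
    simp only [hΘ, Matrix.sub_apply, Matrix.diagonal_mul, Matrix.mul_diagonal,
      Matrix.smul_apply, smul_eq_mul] at h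
    linear_combination h
  rcases eq_or_ne (B i j) 0 with h0 | h0
  · simp [h0]
  · have hτ : (τ i : ℂ) = (τ j : ℂ) + (m : ℂ) := by
      have h := mul_right_cancel₀ h0 hentry
      linear_combination h
    have hpow : Complex.exp ((Real.log t : ℂ) * (m : ℂ)) = ((t ^ (m : ℤ) : ℝ) : ℂ) := by
      have : t ^ (m : ℤ) = Real.exp (Real.log t * (m : ℝ)) := by
        rw [← Real.rpow_intCast t m, Real.rpow_def_of_pos ht]
      rw [this, Complex.ofReal_exp]
      push_cast
      ring_nf
    rw [hτ, mul_add, Complex.exp_add, hpow]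
    ring

/-- Let `Θ = diag(τ)` (real `τ`), `σ` commute with `Θ`, and `(A m)_{m ∈ ℤ}`
be a finitely supported family with `[Θ, A m] = m · A m` and `[σ, A m] = 0`; set
`R = σ + Σ A m`. Then `Φ(t) = exp((log t)·Θ) ⬝ exp((log t)·R)` is differentiable on `(0,∞)`
and satisfies `t · Φ′(t) = (Θ + σ + Σ t^m · A m) ⬝ Φ(t)`, i.e. it is a fundamental solution
of the connection in normal form. -/
theorem fundamental_solution_normal_form (n : ℕ) (τ : Fin n → ℝ)
    (Θ : Matrix (Fin n) (Fin n) ℂ) (hΘ : Θ = Matrix.diagonal fun k => (τ k : ℂ))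
    (σ : Matrix (Fin n) (Fin n) ℂ) (hσ : Θ * σ = σ * Θ)
    (A : ℤ → Matrix (Fin n) (Fin n) ℂ)
    (hAfin : Set.Finite {m : ℤ | A m ≠ 0})
    (hA : ∀ m : ℤ, Θ * A m - A m * Θ = (m : ℂ) • A m)
    (hAσ : ∀ m : ℤ, σ * A m = A m * σ)
    (R : Matrix (Fin n) (Fin n) ℂ) (hR : R = σ + ∑ᶠ m : ℤ, A m)
    (Φ : ℝ → Matrix (Fin n) (Fin n) ℂ)
    (hΦ : Φ = fun t => NormedSpace.exp ((Real.log t : ℂ) • Θ) *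
      NormedSpace.exp ((Real.log t : ℂ) • R)) :
    ∃ Φ' : ℝ → Matrix (Fin n) (Fin n) ℂ,
      (∀ t ∈ Set.Ioi (0 : ℝ), ∀ i j, HasDerivAt (fun s => Φ s i j) (Φ' t i j) t) ∧
      (∀ t ∈ Set.Ioi (0 : ℝ),
        (t : ℂ) • Φ' t = (Θ + σ + ∑ᶠ m : ℤ, ((t ^ (m : ℤ) : ℝ) : ℂ) • A m) * Φ t) := by
  classical
  -- the finitely supported sums as finite sums
  have hsupp : Function.support A = {m : ℤ | A m ≠ 0} := rfl
  have hAfin' : (Function.support A).Finite := hsupp ▸ hAfin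
  have hsum : (∑ᶠ m : ℤ, A m) = ∑ m ∈ hAfin'.toFinset, A m := finsum_eq_sum A hAfin'
  have hsum' : ∀ t : ℝ, (∑ᶠ m : ℤ, ((t ^ (m : ℤ) : ℝ) : ℂ) • A m)
      = ∑ m ∈ hAfin'.toFinset, ((t ^ (m : ℤ) : ℝ) : ℂ) • A m := by
    intro t
    refine finsum_eq_finset_sum_of_support_subset _ ?_
    intro m hm
    simp only [Function.mem_support, ne_eq] at hm
    have : A m ≠ 0 := fun h => hm (by rw [h, smul_zero])
    simpa [Set.Finite.mem_toFinset] using this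
  -- key conjugation identity
  have key : ∀ t : ℝ, 0 < t →
      NormedSpace.exp ((Real.log t : ℂ) • Θ) * R
        = (σ + ∑ᶠ m : ℤ, ((t ^ (m : ℤ) : ℝ) : ℂ) • A m) *
            NormedSpace.exp ((Real.log t : ℂ) • Θ) := by
    intro t ht
    have hcomm : Commute ((Real.log t : ℂ) • Θ) σ := (Commute.smul_left hσ _)
    have hσexp : NormedSpace.exp ((Real.log t : ℂ) • Θ) * σ
        = σ * NormedSpace.exp ((Real.log t : ℂ) • Θ) := (hcomm.exp_left)
    rw [hR, hsum, hsum' t, mul_add, add_mul, hσexp, Finset.mul_sum, Finset.sum_mul]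
    congr 1
    refine Finset.sum_congr rfl fun m _ => ?_
    rw [aux_conj_exp_diag n τ Θ hΘ (A m) m (hA m) ht, smul_mul_assoc]
  -- the candidate derivative
  refine ⟨fun t => (((t⁻¹ : ℝ) : ℂ)) •
      ((Θ + σ + ∑ᶠ m : ℤ, ((t ^ (m : ℤ) : ℝ) : ℂ) • A m) * Φ t), ?_, ?_⟩
  · intro t ht i j
    rw [Set.mem_Ioi] at ht
    have hE1 := aux_deriv_exp_log_smul n Θ ht
    have hE2 := aux_deriv_exp_log_smul n R ht
    have hmul := hE1.mul hE2
    set E1 := NormedSpace.exp ((Real.log t : ℂ) • Θ) with hE1def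
    set E2 := NormedSpace.exp ((Real.log t : ℂ) • R) with hE2def
    have hDeq : (((t⁻¹ : ℝ) : ℂ)) • (Θ * E1) * E2 + E1 * ((((t⁻¹ : ℝ) : ℂ)) • (R * E2))
        = (((t⁻¹ : ℝ) : ℂ)) •
          ((Θ + σ + ∑ᶠ m : ℤ, ((t ^ (m : ℤ) : ℝ) : ℂ) • A m) * Φ t) := by
      rw [smul_mul_assoc, mul_smul_comm, ← smul_add]
      congr 1
      rw [hΦ]
      simp only [← hE1def, ← hE2def]
      rw [← mul_assoc, key t ht, add_mul, add_mul, mul_assoc, mul_assoc, mul_assoc]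
      simp only [← hE1def]
      noncomm_ring
    have hΦderiv : HasDerivAt Φ ((((t⁻¹ : ℝ) : ℂ)) •
        ((Θ + σ + ∑ᶠ m : ℤ, ((t ^ (m : ℤ) : ℝ) : ℂ) • A m) * Φ t)) t := by
      rw [← hDeq, hΦ]
      exact hmul
    -- extract the (i, j) entry via a continuous linear map
    let e : Matrix (Fin n) (Fin n) ℂ →ₗ[ℝ] ℂ :=
      { toFun := fun M => M i j
        map_add' := fun _ _ => rfl
        map_smul' := fun _ _ => rfl }
    have := (LinearMap.toContinuousLinearMap e).hasFDerivAt.comp_hasDerivAt t hΦderiv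
    exact this
  · intro t ht
    rw [Set.mem_Ioi] at ht
    rw [smul_smul]
    have : (t : ℂ) * ((t⁻¹ : ℝ) : ℂ) = 1 := by
      rw [Complex.ofReal_inv]
      exact mul_inv_cancel₀ (Complex.ofReal_ne_zero.mpr ht.ne')
    rw [this, one_smul]
end

section
/- Let n : ℕ, let s : Fin n → ℝ, and set S = i·diag(s) (a purely imaginary diagonal matrix, so that exp(2πi·S) is a diagonal matrix with positive real entries). Let g ∈ GL_n(ℂ) whose multiplicative Jordan decomposition g = g_s ⬝ g_u has semisimple part g_s = exp(2πi·S). Then there exists a unique matrix R ∈ Mat_n(ℂ) such that R − S is nilpotent, (R − S) ⬝ S = S ⬝ (R − S), and exp(2πi·R) = g; namely R = S + N where exp(2πi·N) = g_u with N nilpotent. -/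
open Real Polynomial NormedSpace

attribute [local instance] Matrix.linftyOpSemiNormedRing Matrix.linftyOpNormedRing
  Matrix.linftyOpNormedAlgebra

variable {n : ℕ}

local notation "Mat" => Matrix (Fin n) (Fin n) ℂ

private lemma ulp_exp_eq_sum {A : Mat} {m m' : ℕ} (h : A ^ m = 0) (hm : m ≤ m') :
    NormedSpace.exp A = ∑ k ∈ Finset.range m', (k.factorial : ℂ)⁻¹ • A ^ k := by
  rw [exp_eq_tsum ℂ]
  refine tsum_eq_sum ?_
  intro k hk
  have hk' : m ≤ k := le_trans hm (Nat.le_of_not_lt (by simpa using hk))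
  have : A ^ k = 0 := by
    rw [← Nat.sub_add_cancel hk', pow_add, h, mul_zero]
  simp [this]

private lemma ulp_commute_aeval {A B : Mat} (h : Commute A B) (q : ℂ[X]) :
    Commute A (aeval B q) := by
  induction q using Polynomial.induction_on' with
  | add p q hp hq => simpa [map_add] using hp.add_right hq
  | monomial k c =>
      rw [Polynomial.aeval_monomial]
      have hc : Commute A (algebraMap ℂ Mat c) := (Algebra.commutes c A).symm
      exact hc.mul_right (h.pow_right k)

private lemma ulp_commute_aeval2 (B : Mat) (p q : ℂ[X]) :
    Commute (aeval B p) (aeval B q) := by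
  show _ * _ = _ * _
  rw [← map_mul, ← map_mul, mul_comm]

private lemma ulp_aeval_pow_eq_zero {B : Mat} (hB : B ^ n = 0) {q : ℂ[X]}
    (hq : q.coeff 0 = 0) : (aeval B q) ^ n = 0 := by
  obtain ⟨r, hr⟩ := Polynomial.X_dvd_iff.mpr hq
  rw [← map_pow, hr, mul_pow, map_mul, map_pow, Polynomial.aeval_X, hB, zero_mul]

private lemma ulp_exp_aeval {B : Mat} (hB : B ^ n = 0) {q : ℂ[X]} (hq : q.coeff 0 = 0) :
    NormedSpace.exp (aeval B q) =
      aeval B (∑ k ∈ Finset.range (n + 2), C ((k.factorial : ℂ)⁻¹) * q ^ k) := by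
  rw [ulp_exp_eq_sum (m' := n + 2) (ulp_aeval_pow_eq_zero hB hq) (by omega), map_sum]
  refine Finset.sum_congr rfl fun k _ => ?_
  rw [map_mul, Polynomial.aeval_C, map_pow, Algebra.smul_def]

private lemma ulp_E_split (m : ℕ) (b : ℂ[X]) :
    ∑ k ∈ Finset.range (m + 2), C ((k.factorial : ℂ)⁻¹) * b ^ k
      = 1 + b + b ^ 2 * ∑ j ∈ Finset.range m, C (((j + 2).factorial : ℂ)⁻¹) * b ^ j := by
  rw [Finset.sum_range_succ', Finset.sum_range_succ']
  have h1 : ∀ j ∈ Finset.range m,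
      C (((j + 1 + 1).factorial : ℂ)⁻¹) * b ^ (j + 1 + 1)
        = b ^ 2 * (C (((j + 2).factorial : ℂ)⁻¹) * b ^ j) := by
    intro j _; ring
  rw [Finset.sum_congr rfl h1, ← Finset.mul_sum]
  simp [Nat.factorial]
  ring

private lemma ulp_exists_exp_poly {B : Mat} (hB : B ^ n = 0) :
    ∃ p : ℂ[X], NormedSpace.exp (aeval B (X * p)) = 1 + B := by
  have claim : ∀ s : ℕ, ∃ p e : ℂ[X],
      NormedSpace.exp (aeval B (X * p)) * (1 + aeval B (X ^ (s + 1) * e)) = 1 + B := by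
    intro s
    induction s with
    | zero => exact ⟨0, 1, by simp⟩
    | succ s ih =>
      obtain ⟨p, e, h⟩ := ih
      set b : ℂ[X] := X ^ (s + 1) * e with hb
      set w : ℂ[X] := ∑ j ∈ Finset.range n, C (((j + 2).factorial : ℂ)⁻¹) * (-b) ^ j with hw
      refine ⟨p + X ^ s * e, X ^ s * e ^ 2 * (w + w * b - 1), ?_⟩
      have hnb0 : (-b).coeff 0 = 0 := by
        simp [hb, Polynomial.coeff_zero_eq_eval_zero]
      have hexpnb : NormedSpace.exp (aeval B (-b)) = aeval B (1 - b + b ^ 2 * w) := by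
        rw [ulp_exp_aeval hB hnb0]
        congr 1
        rw [ulp_E_split n (-b), hw]
        ring
      have h1 : NormedSpace.exp (aeval B (X * (p + X ^ s * e)))
          = NormedSpace.exp (aeval B (X * p)) * NormedSpace.exp (aeval B b) := by
        have hsplit : (X : ℂ[X]) * (p + X ^ s * e) = X * p + b := by rw [hb]; ring
        rw [hsplit, map_add, Matrix.exp_add_of_commute _ _ (ulp_commute_aeval2 B _ _)]
      have h2 : NormedSpace.exp (aeval B b) * NormedSpace.exp (aeval B (-b)) = 1 := by
        rw [← Matrix.exp_add_of_commute _ _ (ulp_commute_aeval2 B _ _), ← map_add, add_neg_cancel,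
          map_zero, NormedSpace.exp_zero]
      have hpoly : (1 - b + b ^ 2 * w) * (1 + b)
          = 1 + X ^ (s + 1 + 1) * (X ^ s * e ^ 2 * (w + w * b - 1)) := by
        rw [hb]; ring
      have h3 : NormedSpace.exp (aeval B (-b)) * (1 + aeval B b)
          = 1 + aeval B (X ^ (s + 1 + 1) * (X ^ s * e ^ 2 * (w + w * b - 1))) := by
        have hb1 : (1 : Mat) + aeval B b = aeval B (1 + b) := by simp
        rw [hexpnb, hb1, ← map_mul, hpoly, map_add, map_one]
      have h4 : NormedSpace.exp (aeval B b) *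
          (1 + aeval B (X ^ (s + 1 + 1) * (X ^ s * e ^ 2 * (w + w * b - 1))))
            = 1 + aeval B b := by
        rw [← h3, ← mul_assoc, h2, one_mul]
      rw [h1, mul_assoc, h4]
      exact h
  obtain ⟨p, e, h⟩ := claim n
  refine ⟨p, ?_⟩
  have he : aeval B (X ^ (n + 1) * e) = 0 := by
    rw [map_mul, map_pow, Polynomial.aeval_X, pow_succ, hB, zero_mul, zero_mul]
  rw [← h, he, add_zero, mul_one]

private lemma ulp_exp_eq_one {K : Mat} (hK : IsNilpotent K) (h1 : NormedSpace.exp K = 1) :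
    K = 0 := by
  obtain ⟨m, hm⟩ := hK
  set w : Mat := ∑ j ∈ Finset.range m, ((j + 2).factorial : ℂ)⁻¹ • K ^ j with hw
  have hsplit : NormedSpace.exp K = 1 + K * (1 + K * w) := by
    rw [ulp_exp_eq_sum hm (by omega : m ≤ m + 2), Finset.sum_range_succ',
      Finset.sum_range_succ']
    have hterm : ∀ j ∈ Finset.range m,
        ((j + 1 + 1).factorial : ℂ)⁻¹ • K ^ (j + 1 + 1)
          = K * (K * (((j + 2).factorial : ℂ)⁻¹ • K ^ j)) := by
      intro j _
      rw [pow_succ', pow_succ', mul_smul_comm, mul_smul_comm]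
    rw [Finset.sum_congr rfl hterm, ← Finset.mul_sum, ← Finset.mul_sum, ← hw]
    simp [Nat.factorial]
    noncomm_ring
  have hKv : K * (1 + K * w) = 0 := by
    have h2 : (1 : Mat) + K * (1 + K * w) = 1 := by rw [← hsplit, h1]
    have := congrArg (fun x => x - 1) h2
    simpa using this
  have hcomm : Commute K w := by
    refine Commute.sum_right _ _ _ fun j _ => ?_
    exact ((Commute.refl K).pow_right j).smul_right _
  have hnil : IsNilpotent (K * w) := hcomm.isNilpotent_mul_right ⟨m, hm⟩
  have hunit : IsUnit ((1 : Mat) + K * w) := hnil.isUnit_one_add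
  obtain ⟨v, hv⟩ := hunit
  have hKv' : K * (v : Mat) = 0 := by rw [hv]; exact hKv
  calc K = K * (v : Mat) * ((v⁻¹ : _ˣ) : Mat) := by
        rw [mul_assoc, Units.mul_inv, mul_one]
    _ = 0 := by rw [hKv', zero_mul]

/-- Let `S = i·diag(s)` with `s` real, and let `g ∈ GL_n(ℂ)` have
multiplicative Jordan decomposition `g = exp(2πi·S) ⬝ u` with `u` unipotent commuting with
`exp(2πi·S)`. Then there is a unique `R` with `R − S` nilpotent, `R − S` commuting with `S`,
and `exp(2πi·R) = g`; moreover this `R` equals `S + N` where `exp(2πi·N) = u`, i.e. any such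
`R` satisfies `exp(2πi·(R − S)) = u`. -/
theorem unique_log_with_prescribed_semisimple_part (n : ℕ) (s : Fin n → ℝ)
    (S : Matrix (Fin n) (Fin n) ℂ)
    (hS : S = Complex.I • Matrix.diagonal fun k => (s k : ℂ))
    (g : (Matrix (Fin n) (Fin n) ℂ)ˣ)
    (u : Matrix (Fin n) (Fin n) ℂ) (hu : (u - 1) ^ n = 0)
    (hcomm : NormedSpace.exp ((2 * π * Complex.I) • S) * u =
      u * NormedSpace.exp ((2 * π * Complex.I) • S))
    (hg : g.val = NormedSpace.exp ((2 * π * Complex.I) • S) * u) :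
    (∃! R : Matrix (Fin n) (Fin n) ℂ,
      (R - S) ^ n = 0 ∧ (R - S) * S = S * (R - S) ∧
        NormedSpace.exp ((2 * π * Complex.I) • R) = g.val) ∧
    (∀ R : Matrix (Fin n) (Fin n) ℂ,
      (R - S) ^ n = 0 → (R - S) * S = S * (R - S) →
        NormedSpace.exp ((2 * π * Complex.I) • R) = g.val →
          NormedSpace.exp ((2 * π * Complex.I) • (R - S)) = u) := by
  set c : ℂ := 2 * π * Complex.I with hc
  have hpi : c ≠ 0 := by
    refine mul_ne_zero (mul_ne_zero two_ne_zero ?_) Complex.I_ne_zero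
    exact_mod_cast Real.pi_ne_zero
  -- the diagonal matrix exp(c • S)
  set d : Fin n → ℂ := fun k => Complex.exp (c * Complex.I * s k) with hd
  have harg : ∀ k : Fin n, c * Complex.I * (s k : ℂ) = ((-(2 * π * s k) : ℝ) : ℂ) := by
    intro k
    rw [hc]
    push_cast
    have hII : Complex.I * Complex.I = -1 := Complex.I_mul_I
    linear_combination (2 * (π : ℂ) * (s k)) * hII
  have hD : NormedSpace.exp (c • S) = Matrix.diagonal d := by
    rw [hS, smul_smul, ← Matrix.diagonal_smul, Matrix.exp_diagonal, Pi.exp_def]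
    funext k
    simp only [Pi.smul_apply, smul_eq_mul]
    rw [← Complex.exp_eq_exp_ℂ]
  have hdinj : ∀ i j, d i = d j → s i = s j := by
    intro i j hij
    have hdk : ∀ k, d k = ((Real.exp (-(2 * π * s k)) : ℝ) : ℂ) := by
      intro k
      rw [hd, Complex.ofReal_exp]
      exact congrArg Complex.exp (harg k)
    rw [hdk i, hdk j] at hij
    have := Real.exp_eq_exp.mp (Complex.ofReal_inj.mp hij)
    have hπ : (0 : ℝ) < π := Real.pi_pos
    nlinarith
  -- u commutes with S
  have hSd : S = Matrix.diagonal (fun k => Complex.I * s k) := by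
    rw [hS, ← Matrix.diagonal_smul]
    congr 1
  have hcSu : Commute S u := by
    show S * u = u * S
    rw [hD] at hcomm
    ext i j
    rw [hSd, Matrix.diagonal_mul, Matrix.mul_diagonal]
    by_cases hij : s i = s j
    · rw [hij]; ring
    · have hentry : d i * u i j = u i j * d j := by
        have := congrArg (fun M => M i j) hcomm
        simpa [Matrix.diagonal_mul, Matrix.mul_diagonal] using this
      have hdne : d i ≠ d j := fun h => hij (hdinj i j h)
      have hu0 : u i j = 0 := by
        have h0 : u i j * (d i - d j) = 0 := by rw [mul_sub]; rw [mul_comm] at hentry; linear_combination hentry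
        rcases mul_eq_zero.mp h0 with h | h
        · exact h
        · exact absurd (sub_eq_zero.mp h) hdne
      simp [hu0]
  -- construct N
  set B : Matrix (Fin n) (Fin n) ℂ := u - 1 with hB
  have hBn : B ^ n = 0 := hu
  obtain ⟨p, hp⟩ := ulp_exists_exp_poly hBn
  set q : ℂ[X] := X * p with hq
  set M : Matrix (Fin n) (Fin n) ℂ := aeval B q with hM
  have hexpM : NormedSpace.exp M = u := by
    rw [hM, hq, hp, hB]; abel
  have hMn : M ^ n = 0 := by
    rw [hM, ← map_pow, hq, mul_pow, map_mul, map_pow, Polynomial.aeval_X, hBn, zero_mul]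
  set N : Matrix (Fin n) (Fin n) ℂ := c⁻¹ • M with hN
  have hcN : c • N = M := by
    rw [hN, smul_smul, mul_inv_cancel₀ hpi, one_smul]
  have hcSB : Commute S B := hcSu.sub_right (Commute.one_right S)
  have hcSM : Commute S M := ulp_commute_aeval hcSB q
  have hcSN : Commute S N := hcSM.smul_right c⁻¹
  -- key: any admissible R satisfies exp (c • (R - S)) = u
  have key : ∀ R : Matrix (Fin n) (Fin n) ℂ, (R - S) ^ n = 0 → (R - S) * S = S * (R - S) →
      NormedSpace.exp (c • R) = g.val → NormedSpace.exp (c • (R - S)) = u := by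
    intro R h1 h2 h3
    have h2' : Commute S (R - S) := (h2 : Commute (R - S) S).symm
    have hcm : Commute (c • S) (c • (R - S)) := (h2'.smul_left c).smul_right c
    have hR : c • S + c • (R - S) = c • R := by rw [← smul_add]; congr 1; abel
    have hsplit : NormedSpace.exp (c • R)
        = NormedSpace.exp (c • S) * NormedSpace.exp (c • (R - S)) := by
      rw [← hR, Matrix.exp_add_of_commute _ _ hcm]
    rw [h3, hg] at hsplit
    exact ((isUnit_exp (c • S)).mul_left_cancel hsplit).symm
  have hexistsu : ∀ R : Matrix (Fin n) (Fin n) ℂ, (R - S) ^ n = 0 → (R - S) * S = S * (R - S) →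
      NormedSpace.exp (c • R) = g.val → R = S + N := by
    intro R h1 h2 h3
    have hA := key R h1 h2 h3
    set A : Matrix (Fin n) (Fin n) ℂ := c • (R - S) with hAdef
    have hAn : A ^ n = 0 := by rw [hAdef, _root_.smul_pow, h1, smul_zero]
    have hAu : Commute A u := by
      have := (Commute.refl A).exp_right
      rwa [hA] at this
    have hAB : Commute A B := hAu.sub_right (Commute.one_right A)
    have hAM : Commute A M := ulp_commute_aeval hAB q
    have hKnil : IsNilpotent (A - M) := Commute.isNilpotent_sub hAM ⟨n, hAn⟩ ⟨n, hMn⟩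
    have hKexp : NormedSpace.exp (A - M) = 1 := by
      have h5 : NormedSpace.exp (A - M) * NormedSpace.exp M = NormedSpace.exp A := by
        rw [← Matrix.exp_add_of_commute _ _ (hAM.sub_left (Commute.refl M))]
        congr 1; abel
      rw [hA, ← hexpM] at h5
      have h6 : NormedSpace.exp (A - M) * NormedSpace.exp M
          = 1 * NormedSpace.exp M := by rw [h5, one_mul]
      exact (isUnit_exp M).mul_right_cancel h6
    have hAM0 : A = M := sub_eq_zero.mp (ulp_exp_eq_one hKnil hKexp)
    have hRS : R - S = N := by
      rw [hN, ← hAM0, hAdef, smul_smul, inv_mul_cancel₀ hpi, one_smul]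
    exact sub_eq_iff_eq_add'.mp hRS
  refine ⟨⟨S + N, ⟨?_, ?_, ?_⟩, ?_⟩, fun R h1 h2 h3 => key R h1 h2 h3⟩
  · have h0 : S + N - S = N := by abel
    rw [h0, hN, _root_.smul_pow, hMn, smul_zero]
  · have h0 : S + N - S = N := by abel
    rw [h0]
    exact hcSN.symm
  · rw [smul_add, hcN, Matrix.exp_add_of_commute _ _ (hcSM.smul_left c), hexpM, hg]
  · intro R hR
    exact hexistsu R hR.1 hR.2.1 hR.2.2
end
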